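/- For each s ∈ S, the diagonal entry M̄_ss equals 0 if and only if the s-th row and the s-th column of G are entirely zero, i.e., G_{s s̄} = 0 and G_{s̄ s} = 0 for all s̄ ∈ S. -/

import Mathlib

open Matrix

noncomputable section

/-- The diagonal of `M̄`: `dᵀ(I−Q)⁻¹`. -/
def MdiagSub {S : Type*} [Fintype S] [DecidableEq S]
    (Q : Matrix S S ℝ) (d : S → ℝ) : S → ℝ :=
  Matrix.vecMul d (1 - Q)⁻¹

/-- `G = M̄(I−Q) + (M̄(I−Q))ᵀ`. -/
def Gmat {S : Type*} [Fintype S] [DecidableEq S]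
    (Q : Matrix S S ℝ) (d : S → ℝ) : Matrix S S ℝ :=
  Matrix.diagonal (MdiagSub Q d) * (1 - Q) +
    (Matrix.diagonal (MdiagSub Q d) * (1 - Q)).transpose

end

/-- Minimum principle: if `(1−Q)y = c` with `c ≥ 0`, `Q` substochastic and `1−Q`
invertible, then `y ≥ 0`. -/
lemma key_nonneg {S : Type} [Fintype S] [Nonempty S] [DecidableEq S]
    (Q : Matrix S S ℝ) (hQ0 : ∀ s s', 0 ≤ Q s s') (hQ1 : ∀ s, ∑ s', Q s s' ≤ 1)
    (hinv : IsUnit (1 - Q)) (c y : S → ℝ) (hc : ∀ s, 0 ≤ c s)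
    (hy : (1 - Q).mulVec y = c) : ∀ s, 0 ≤ y s := by
  classical
  by_contra h
  push_neg at h
  obtain ⟨s₀, hs₀⟩ := h
  obtain ⟨sm, -, hsm⟩ := Finset.exists_min_image Finset.univ y ⟨s₀, Finset.mem_univ s₀⟩
  set m : ℝ := y sm with hm
  have hmneg : m < 0 := lt_of_le_of_lt (hsm s₀ (Finset.mem_univ _)) hs₀
  have hmle : ∀ t, m ≤ y t := fun t => hsm t (Finset.mem_univ t)
  have heq : ∀ s, y s - ∑ t, Q s t * y t = c s := by
    intro s
    have := congrFun hy s
    rw [sub_mulVec, one_mulVec] at this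
    simpa [mulVec, dotProduct] using this
  -- key claims at minimizers
  have hclaims : ∀ s, y s = m → (∀ t, Q s t ≠ 0 → y t = m) := by
    intro s hs
    have hT1 : (∑ t, Q s t * m) ≤ ∑ t, Q s t * y t := by
      apply Finset.sum_le_sum
      intro t _
      exact mul_le_mul_of_nonneg_left (hmle t) (hQ0 s t)
    have hT2 : m ≤ ∑ t, Q s t * m := by
      rw [← Finset.sum_mul]
      nlinarith [hQ1 s]
    have hT3 : (∑ t, Q s t * y t) ≤ m := by
      have := heq s
      have := hc s
      linarith [hs ▸ (by linarith [heq s, hc s] : y s - ∑ t, Q s t * y t ≥ 0)]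
    have hTeq : ∑ t, Q s t * y t = ∑ t, Q s t * m := le_antisymm (by linarith) hT1
    intro t hQt
    by_contra hyt
    have hlt : Q s t * m < Q s t * y t := by
      have hQpos : 0 < Q s t := lt_of_le_of_ne (hQ0 s t) (Ne.symm hQt)
      exact mul_lt_mul_of_pos_left (lt_of_le_of_ne (hmle t) (Ne.symm hyt)) hQpos
    have : (∑ t, Q s t * m) < ∑ t, Q s t * y t := by
      apply Finset.sum_lt_sum
      · intro i _; exact mul_le_mul_of_nonneg_left (hmle i) (hQ0 s i)
      · exact ⟨t, Finset.mem_univ t, hlt⟩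
    linarith [hTeq]
  -- the minimizer set
  set A : Finset S := Finset.univ.filter (fun s => y s = m) with hA
  have hmemA : ∀ s, s ∈ A ↔ y s = m := by
    intro s; simp [hA]
  have hAne : Nonempty ↥A := ⟨⟨sm, (hmemA sm).2 rfl⟩⟩
  set B : Matrix ↥A ↥A ℝ := (1 - Q).submatrix Subtype.val Subtype.val with hB
  -- rows of B sum to zero
  have hrow : ∀ i : ↥A, ∑ j : ↥A, B i j = 0 := by
    intro i
    have hi : y i.val = m := (hmemA i.val).1 i.2
    have hrow1 : ∑ t, Q i.val t = 1 := by
      -- from equality case in hclaims derivation: rebuild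
      have hT1 : (∑ t, Q i.val t * m) ≤ ∑ t, Q i.val t * y t := by
        apply Finset.sum_le_sum
        intro t _
        exact mul_le_mul_of_nonneg_left (hmle t) (hQ0 i.val t)
      have hT3 : (∑ t, Q i.val t * y t) ≤ m := by
        linarith [heq i.val, hc i.val, hi]
      have h2 : (∑ t, Q i.val t) * m ≤ m := by
        rw [Finset.sum_mul]; linarith
      have h3 : m ≤ (∑ t, Q i.val t) * m := by nlinarith [hQ1 i.val]
      have h4 : (∑ t, Q i.val t) * m = 1 * m := by
        rw [le_antisymm h2 h3, one_mul]
      exact mul_right_cancel₀ (ne_of_lt hmneg) h4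
    have hsupp : ∀ t, t ∉ A → Q i.val t = 0 := by
      intro t ht
      by_contra hne
      exact ht ((hmemA t).2 (hclaims i.val hi t hne))
    have hsum : ∑ j : ↥A, B i j = ∑ t ∈ A, (1 - Q) i.val t := by
      rw [hB]
      exact Finset.sum_coe_sort A (fun t => (1 - Q) i.val t)
    rw [hsum]
    have hext : ∑ t ∈ A, (1 - Q) i.val t = ∑ t, (1 - Q) i.val t := by
      apply Finset.sum_subset (Finset.subset_univ A)
      intro t _ ht
      have hit : i.val ≠ t := fun h => ht (h ▸ i.2)
      simp [Matrix.sub_apply, one_apply, hit, hsupp t ht]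
    rw [hext]
    have : ∑ t, (1 - Q) i.val t = (∑ t, (1 : Matrix S S ℝ) i.val t) - ∑ t, Q i.val t := by
      rw [← Finset.sum_sub_distrib]; rfl
    rw [this, hrow1]
    simp [one_apply]
  -- hence B is singular
  have hBdet : B.det = 0 := by
    rw [← Matrix.exists_mulVec_eq_zero_iff]
    refine ⟨fun _ => 1, ?_, ?_⟩
    · intro h0
      obtain ⟨i⟩ := hAne
      exact one_ne_zero (congrFun h0 i)
    · ext i
      simpa [mulVec, dotProduct] using hrow i
  -- so there is a nonzero left-kernel vector of B
  obtain ⟨u, hu0, huB⟩ := Matrix.exists_vecMul_eq_zero_iff.mpr hBdet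
  -- extend it by zero to S
  set w : S → ℝ := fun s => if h : s ∈ A then u ⟨s, h⟩ else 0 with hw
  have hwA : ∀ i : ↥A, w i.val = u i := by
    intro i
    simp only [hw, dif_pos i.2]
  have hwvec : Matrix.vecMul w (1 - Q) = 0 := by
    ext t
    have hsum : ∑ s, w s * (1 - Q) s t = ∑ s ∈ A, w s * (1 - Q) s t := by
      symm
      apply Finset.sum_subset (Finset.subset_univ A)
      intro s _ hs
      simp [hw, dif_neg hs]
    have hsum2 : ∑ s ∈ A, w s * (1 - Q) s t = ∑ i : ↥A, u i * (1 - Q) i.val t := by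
      rw [← Finset.sum_coe_sort A (fun s => w s * (1 - Q) s t)]
      exact Finset.sum_congr rfl fun i _ => by rw [hwA i]
    by_cases ht : t ∈ A
    · have := congrFun huB ⟨t, ht⟩
      simp only [vecMul, dotProduct, Pi.zero_apply] at this ⊢
      rw [hsum, hsum2]
      simpa [hB] using this
    · simp only [vecMul, dotProduct, Pi.zero_apply]
      rw [hsum, hsum2]
      apply Finset.sum_eq_zero
      intro i _
      have hi : y i.val = m := (hmemA i.val).1 i.2
      have hit : i.val ≠ t := fun h => ht (h ▸ i.2)
      have hQ : Q i.val t = 0 := by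
        by_contra hne
        exact ht ((hmemA t).2 (hclaims i.val hi t hne))
      simp [Matrix.sub_apply, one_apply, hit, hQ]
  have hinj := Matrix.vecMul_injective_iff_isUnit.mpr hinv
  have hw0 : w = 0 := hinj (hwvec.trans (Matrix.zero_vecMul (1 - Q)).symm)
  obtain ⟨i, hi⟩ := Function.ne_iff.mp hu0
  apply hi
  have := congrFun hw0 i.val
  rw [hwA i] at this
  exact this

/-- For `Q` substochastic with `I − Q` invertible and `d ≥ 0`,
`M̄_ss = 0` iff the `s`-th row and `s`-th column of `G` are entirely zero. -/
theorem stmt18 {S : Type} [Fintype S] [Nonempty S] [DecidableEq S]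
    (Q : Matrix S S ℝ) (hQ0 : ∀ s s', 0 ≤ Q s s') (hQ1 : ∀ s, ∑ s', Q s s' ≤ 1)
    (hinv : IsUnit (1 - Q))
    (d : S → ℝ) (hd : ∀ s, 0 ≤ d s) :
    ∀ s : S, MdiagSub Q d s = 0 ↔
      ∀ sb : S, Gmat Q d s sb = 0 ∧ Gmat Q d sb s = 0 := by
  classical
  set N : Matrix S S ℝ := (1 - Q)⁻¹ with hN
  have hdet : IsUnit (1 - Q).det := (Matrix.isUnit_iff_isUnit_det _).mp hinv
  have hMN : (1 - Q) * N = 1 := Matrix.mul_nonsing_inv _ hdet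
  have hNM : N * (1 - Q) = 1 := Matrix.nonsing_inv_mul _ hdet
  -- N is entrywise nonnegative
  have hNpos : ∀ i j, 0 ≤ N i j := by
    intro i j
    have hy : (1 - Q).mulVec (fun i => N i j) = Pi.single j 1 := by
      have : (fun i => N i j) = N.mulVec (Pi.single j 1) := by
        rw [Matrix.mulVec_single_one]; rfl
      rw [this, Matrix.mulVec_mulVec, hMN, Matrix.one_mulVec]
    have := key_nonneg Q hQ0 hQ1 hinv (Pi.single j 1) (fun i => N i j)
      (fun s => by
        by_cases h : s = j
        · subst h; simp
        · simp [Pi.single_apply, h]) hy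
    exact this i
  set md : S → ℝ := MdiagSub Q d with hmd
  have hm0 : ∀ t, 0 ≤ md t := by
    intro t
    have : md t = ∑ s, d s * N s t := by
      simp [hmd, MdiagSub, vecMul, dotProduct, hN]
    rw [this]
    exact Finset.sum_nonneg fun s _ => mul_nonneg (hd s) (hNpos s t)
  have hfix : ∀ t, md t - ∑ s, md s * Q s t = d t := by
    intro t
    have hvm : Matrix.vecMul md (1 - Q) = d := by
      rw [hmd]
      show Matrix.vecMul (Matrix.vecMul d N) (1 - Q) = d
      rw [Matrix.vecMul_vecMul, hNM, Matrix.vecMul_one]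
    have := congrFun hvm t
    simp only [vecMul, dotProduct, Matrix.sub_apply, one_apply, mul_sub] at this
    rw [← this, Finset.sum_sub_distrib]
    congr 1
    simp [Finset.sum_ite_eq, mul_comm]
  have hG : ∀ a b, Gmat Q d a b = md a * (1 - Q) a b + md b * (1 - Q) b a := by
    intro a b
    simp only [Gmat, Matrix.add_apply, Matrix.transpose_apply, Matrix.diagonal_mul, ← hmd]
  intro s
  constructor
  · intro hs sb
    -- from the fixed point equation at s, all Q t s * md t vanish
    have hzero : ∀ t, md t * Q t s = 0 := by
      have hsum : ∑ t, md t * Q t s = 0 := by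
        have := hfix s
        rw [hs] at this
        have hds := hd s
        have : ∑ t, md t * Q t s = - d s := by linarith
        have hnn : 0 ≤ ∑ t, md t * Q t s :=
          Finset.sum_nonneg fun t _ => mul_nonneg (hm0 t) (hQ0 t s)
        linarith
      intro t
      have := (Finset.sum_eq_zero_iff_of_nonneg
        (fun t _ => mul_nonneg (hm0 t) (hQ0 t s))).mp hsum t (Finset.mem_univ t)
      exact this
    have hterm : md s * (1 - Q) s sb + md sb * (1 - Q) sb s = 0 := by
      rw [hs, zero_mul, zero_add]
      by_cases h : sb = s
      · subst h; rw [hs, zero_mul]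
      · have : (1 - Q) sb s = - Q sb s := by
          simp [Matrix.sub_apply, one_apply, h]
        rw [this]
        have := hzero sb
        simp only [mul_neg]
        linarith
    constructor
    · rw [hG s sb]; exact hterm
    · rw [hG sb s]; linarith [hterm]
  · intro h
    have hss := (h s).1
    rw [hG s s] at hss
    have hQss : Q s s ≠ 1 := by
      intro hQs
      have hsplit : Q s s + ∑ t ∈ Finset.univ.erase s, Q s t = ∑ t, Q s t :=
        Finset.add_sum_erase _ _ (Finset.mem_univ s)
      have h2 : 0 ≤ ∑ t ∈ Finset.univ.erase s, Q s t :=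
        Finset.sum_nonneg fun t _ => hQ0 s t
      rw [hQs] at hsplit
      have hsum0 : ∑ t ∈ Finset.univ.erase s, Q s t = 0 := by
        linarith [hQ1 s]
      have hzero : ∀ t, t ≠ s → Q s t = 0 := by
        intro t hts
        exact (Finset.sum_eq_zero_iff_of_nonneg (fun t _ => hQ0 s t)).mp hsum0 t
          (Finset.mem_erase.mpr ⟨hts, Finset.mem_univ t⟩)
      have hrow0 : ∀ t, (1 - Q) s t = 0 := by
        intro t
        by_cases hts : t = s
        · subst hts; simp [Matrix.sub_apply, one_apply, hQs]
        · simp [Matrix.sub_apply, one_apply, show s ≠ t from fun h => hts h.symm, hzero t hts]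
      have hinj := Matrix.vecMul_injective_iff_isUnit.mpr hinv
      have : Matrix.vecMul (Pi.single s 1) (1 - Q) = 0 := by
        rw [Matrix.single_one_vecMul]
        ext t; exact hrow0 t
      have h0 : (Pi.single s (1:ℝ)) = 0 :=
        hinj (this.trans (Matrix.zero_vecMul (1 - Q)).symm)
      have := congrFun h0 s
      simp at this
    have h1Q : (1 - Q) s s ≠ 0 := by
      simp only [Matrix.sub_apply, one_apply_eq]
      exact fun he => hQss (by linarith [sub_eq_zero.mp he])
    have : md s * (1 - Q) s s + md s * (1 - Q) s s = 0 := hss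
    have : md s * (1 - Q) s s = 0 := by linarith
    rcases mul_eq_zero.mp this with h | h
    · exact h
    · exact absurd h h1Q
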